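/- Let q ∈ ℤ[i] with |q| ≥ 2 and let D = {δ ∈ ℤ[i] : δ = δ₁ + iδ₂, 0 ≤ δ₁, δ₂ < |q|²} (assuming |q|² ∈ ℤ). Then the subset E₀ = {δ ∈ D : q divides δ in ℤ[i]} has cardinality |q|², and D \ E₀ has cardinality |q|⁴ − |q|². -/

import Mathlib

local notation "ℤ[i]" => GaussianInt

namespace Card16Aux

/-- Reduction of a Gaussian integer componentwise mod `n`. -/
def red (n : ℤ) (x : ℤ[i]) : ℤ[i] := ⟨x.re % n, x.im % n⟩

theorem star_dvd_star' {a b : ℤ[i]} (h : a ∣ b) : star a ∣ star b := by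
  obtain ⟨c, rfl⟩ := h
  exact ⟨star c, by rw [star_mul, mul_comm]⟩

variable {n : ℤ} (hn : 0 < n)

include hn in
theorem red_bounds (x : ℤ[i]) :
    0 ≤ (red n x).re ∧ (red n x).re < n ∧ 0 ≤ (red n x).im ∧ (red n x).im < n :=
  ⟨Int.emod_nonneg _ hn.ne', Int.emod_lt_of_pos _ hn,
   Int.emod_nonneg _ hn.ne', Int.emod_lt_of_pos _ hn⟩

theorem dvd_sub_red (x : ℤ[i]) : ((n : ℤ) : ℤ[i]) ∣ x - red n x := by
  rw [Zsqrtd.intCast_dvd]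
  constructor
  · show n ∣ x.re - x.re % n
    simp [Int.emod_def]
  · show n ∣ x.im - x.im % n
    simp [Int.emod_def]

theorem red_eq_self {x : ℤ[i]} (h1 : 0 ≤ x.re) (h2 : x.re < n) (h3 : 0 ≤ x.im)
    (h4 : x.im < n) : red n x = x :=
  Zsqrtd.ext (Int.emod_eq_of_lt h1 h2) (Int.emod_eq_of_lt h3 h4)

theorem red_congr {x y : ℤ[i]} (h : ((n : ℤ) : ℤ[i]) ∣ x - y) : red n x = red n y := by
  rw [Zsqrtd.intCast_dvd] at h
  obtain ⟨h1, h2⟩ := h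
  have e1 : (x - y).re = x.re - y.re := rfl
  have e2 : (x - y).im = x.im - y.im := rfl
  rw [e1] at h1; rw [e2] at h2
  exact Zsqrtd.ext
    (Int.ModEq.symm (Int.modEq_iff_dvd.mpr h1))
    (Int.ModEq.symm (Int.modEq_iff_dvd.mpr h2))

theorem dvd_of_red_eq {x y : ℤ[i]} (h : red n x = red n y) :
    ((n : ℤ) : ℤ[i]) ∣ x - y := by
  have := dvd_sub (dvd_sub_red (n := n) x) (dvd_sub_red (n := n) y)
  rw [h] at this
  simpa [sub_sub_sub_cancel_right] using this

end Card16Aux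

open Card16Aux Finset in
/-- For `q ∈ ℤ[i]` with `|q| ≥ 2` and
`D = {δ = δ₁ + iδ₂ ∈ ℤ[i] : 0 ≤ δ₁, δ₂ < |q|²}`, the set
`E₀ = {δ ∈ D : q ∣ δ}` has cardinality `|q|²` and `D \ E₀` has cardinality
`|q|⁴ - |q|²`. -/
theorem card_divisible_representatives (q : ℤ[i]) (hq : 2 ≤ ‖(q : ℂ)‖) :
    let n : ℤ := Zsqrtd.norm q
    let D : Set ℤ[i] := {δ | 0 ≤ δ.re ∧ δ.re < n ∧ 0 ≤ δ.im ∧ δ.im < n}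
    let E₀ : Set ℤ[i] := {δ ∈ D | q ∣ δ}
    (E₀.ncard : ℤ) = n ∧ ((D \ E₀).ncard : ℤ) = n ^ 2 - n := by
  intro n D E₀
  classical
  have hq0 : q ≠ 0 := by
    intro h0; rw [h0] at hq; simp at hq; linarith
  have hn : 0 < n := GaussianInt.norm_pos.mpr hq0
  have hnq : ((n : ℤ) : ℤ[i]) = q * star q := Zsqrtd.norm_eq_mul_conj q
  have hqn : q ∣ ((n : ℤ) : ℤ[i]) := ⟨star q, hnq⟩
  have hqn' : star q ∣ ((n : ℤ) : ℤ[i]) := ⟨q, by rw [hnq, mul_comm]⟩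
  set DF : Finset ℤ[i] :=
    (Finset.Ico 0 n ×ˢ Finset.Ico 0 n).map
      ⟨fun p => ⟨p.1, p.2⟩, fun a b h => by
        cases a; cases b
        simpa [Prod.ext_iff, Zsqrtd.ext_iff] using h⟩ with hDF
  have memDF : ∀ x : ℤ[i], x ∈ DF ↔ (0 ≤ x.re ∧ x.re < n ∧ 0 ≤ x.im ∧ x.im < n) := by
    intro x
    simp only [hDF, Finset.mem_map, Finset.mem_product, Finset.mem_Ico,
      Function.Embedding.coeFn_mk]
    constructor
    · rintro ⟨⟨a, b⟩, ⟨⟨h1, h2⟩, h3, h4⟩, rfl⟩; exact ⟨h1, h2, h3, h4⟩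
    · rintro ⟨h1, h2, h3, h4⟩; exact ⟨(x.re, x.im), ⟨⟨h1, h2⟩, h3, h4⟩, rfl⟩
  have redDF : ∀ x : ℤ[i], red n x ∈ DF := fun x => (memDF _).mpr (red_bounds hn x)
  have redD : ∀ x ∈ DF, red n x = x := fun x hx => by
    obtain ⟨h1, h2, h3, h4⟩ := (memDF x).mp hx
    exact red_eq_self h1 h2 h3 h4
  set E₀F : Finset ℤ[i] := DF.filter (fun δ => q ∣ δ) with hE₀F
  set E₁F : Finset ℤ[i] := DF.filter (fun δ => star q ∣ δ) with hE₁F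
  -- the image of `m ↦ red (q m)` over `DF` is `E₀F`
  have himage : DF.image (fun m => red n (q * m)) = E₀F := by
    apply Finset.ext; intro δ
    simp only [Finset.mem_image, hE₀F, Finset.mem_filter]
    constructor
    · rintro ⟨m, _, rfl⟩
      refine ⟨redDF _, ?_⟩
      have : q ∣ q * m - red n (q * m) := dvd_trans hqn (dvd_sub_red _)
      exact (dvd_sub_right (dvd_mul_right q m)).mp this
    · rintro ⟨hδD, m, rfl⟩
      refine ⟨red n m, redDF m, ?_⟩
      have hd : ((n : ℤ) : ℤ[i]) ∣ q * red n m - q * m := by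
        have h := (dvd_sub_red (n := n) m).mul_left q
        have e : q * red n m - q * m = -(q * (m - red n m)) := by ring
        rw [e]
        exact dvd_neg.mpr h
      rw [red_congr hd, redD _ hδD]
  -- each fiber has cardinality `E₁F.card`
  have hfiber : ∀ δ ∈ DF.image (fun m => red n (q * m)),
      (DF.filter (fun m => red n (q * m) = δ)).card = E₁F.card := by
    intro δ hδ
    obtain ⟨m₀, _, hm₀⟩ := Finset.mem_image.mp hδ
    apply Finset.card_bij' (fun m _ => red n (m - m₀)) (fun x _ => red n (x + m₀))
    · intro m hm
      rw [Finset.mem_filter] at hm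
      obtain ⟨hmD, hmf⟩ := hm
      rw [hE₁F, Finset.mem_filter]
      refine ⟨redDF _, ?_⟩
      have h1 : ((n : ℤ) : ℤ[i]) ∣ q * (m - m₀) := by
        have := dvd_of_red_eq (hmf.trans hm₀.symm)
        have e : q * m - q * m₀ = q * (m - m₀) := by ring
        rwa [← e]
      rw [hnq] at h1
      have h2 : star q ∣ m - m₀ := (mul_dvd_mul_iff_left hq0).mp h1
      have h3 : star q ∣ (m - m₀) - red n (m - m₀) := dvd_trans hqn' (dvd_sub_red _)
      have e : red n (m - m₀) = (m - m₀) - ((m - m₀) - red n (m - m₀)) := by ring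
      rw [e]
      exact dvd_sub h2 h3
    · intro x hx
      rw [hE₁F, Finset.mem_filter] at hx
      obtain ⟨hxD, hxq⟩ := hx
      rw [Finset.mem_filter]
      refine ⟨redDF _, ?_⟩
      have e1 : red n (q * red n (x + m₀)) = red n (q * (x + m₀)) := by
        apply red_congr
        have h := (dvd_sub_red (n := n) (x + m₀)).mul_left q
        have e : q * red n (x + m₀) - q * (x + m₀) = -(q * ((x + m₀) - red n (x + m₀))) := by
          ring
        rw [e]
        exact dvd_neg.mpr h
      have e2 : red n (q * (x + m₀)) = red n (q * m₀) := by
        apply red_congr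
        have h : ((n : ℤ) : ℤ[i]) ∣ q * x := by
          rw [hnq]; exact mul_dvd_mul_left q hxq
        have e : q * (x + m₀) - q * m₀ = q * x := by ring
        rw [e]
        exact h
      rw [e1, e2, hm₀]
    · intro m hm
      rw [Finset.mem_filter] at hm
      have e : red n (red n (m - m₀) + m₀) = red n m := by
        apply red_congr
        have h := (dvd_sub_red (n := n) (m - m₀))
        have e' : red n (m - m₀) + m₀ - m = -((m - m₀) - red n (m - m₀)) := by ring
        rw [e']
        exact dvd_neg.mpr h
      rw [e, redD _ hm.1]
    · intro x hx
      rw [hE₁F, Finset.mem_filter] at hx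
      have e : red n (red n (x + m₀) - m₀) = red n x := by
        apply red_congr
        have h := (dvd_sub_red (n := n) (x + m₀))
        have e' : red n (x + m₀) - m₀ - x = -((x + m₀) - red n (x + m₀)) := by ring
        rw [e']
        exact dvd_neg.mpr h
      rw [e, redD _ hx.1]
  have hDcard : DF.card = n.toNat * n.toNat := by
    simp [hDF]
  have hsum : DF.card = E₀F.card * E₁F.card := by
    rw [Finset.card_eq_sum_card_image (fun m => red n (q * m)) DF,
      Finset.sum_congr rfl hfiber, Finset.sum_const, himage, smul_eq_mul]
  have hstar_n : star (((n : ℤ)) : ℤ[i]) = ((n : ℤ) : ℤ[i]) := by simp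
  have hconj : E₀F.card = E₁F.card := by
    apply Finset.card_bij' (fun δ _ => red n (star δ)) (fun x _ => red n (star x))
    · intro δ hδ
      rw [hE₀F, Finset.mem_filter] at hδ
      rw [hE₁F, Finset.mem_filter]
      refine ⟨redDF _, ?_⟩
      have h1 : star q ∣ star δ := star_dvd_star' hδ.2
      have h2 : star q ∣ star δ - red n (star δ) := dvd_trans hqn' (dvd_sub_red _)
      exact (dvd_sub_right h1).mp h2
    · intro x hx
      rw [hE₁F, Finset.mem_filter] at hx
      rw [hE₀F, Finset.mem_filter]
      refine ⟨redDF _, ?_⟩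
      have h1 : q ∣ star x := by
        have := star_dvd_star' hx.2
        simpa using this
      have h2 : q ∣ star x - red n (star x) := dvd_trans hqn (dvd_sub_red _)
      exact (dvd_sub_right h1).mp h2
    · intro δ hδ
      rw [hE₀F, Finset.mem_filter] at hδ
      have h := dvd_sub_red (n := n) (star δ)
      have h2 : ((n : ℤ) : ℤ[i]) ∣ star (red n (star δ)) - δ := by
        have := star_dvd_star' h
        rw [hstar_n] at this
        simpa using dvd_neg.mpr this
      have e : red n (star (red n (star δ))) = red n δ := red_congr h2
      rw [e, redD _ hδ.1]
    · intro x hx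
      rw [hE₁F, Finset.mem_filter] at hx
      have h := dvd_sub_red (n := n) (star x)
      have h2 : ((n : ℤ) : ℤ[i]) ∣ star (red n (star x)) - x := by
        have := star_dvd_star' h
        rw [hstar_n] at this
        simpa using dvd_neg.mpr this
      have e : red n (star (red n (star x))) = red n x := red_congr h2
      rw [e, redD _ hx.1]
  have hE₀card : E₀F.card = n.toNat := by
    have h : E₀F.card * E₀F.card = n.toNat * n.toNat := by
      rw [← hDcard, hsum, hconj]
    exact Nat.mul_self_inj.mp h
  have hDset : D = ↑DF := by
    ext x
    rw [Finset.mem_coe, memDF x]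
    exact Iff.rfl
  have hE₀set : E₀ = ↑E₀F := by
    ext x
    rw [Finset.mem_coe, hE₀F, Finset.mem_filter, memDF x]
    exact Iff.rfl
  constructor
  · rw [hE₀set, Set.ncard_coe_finset, hE₀card]
    exact Int.toNat_of_nonneg hn.le
  · have hsub : E₀F ⊆ DF := Finset.filter_subset _ _
    have hsd : D \ E₀ = ↑(DF \ E₀F) := by
      rw [hDset, hE₀set, Finset.coe_sdiff]
    rw [hsd, Set.ncard_coe_finset, Finset.card_sdiff_of_subset hsub, hDcard, hE₀card]
    have h1 : (n.toNat : ℤ) = n := Int.toNat_of_nonneg hn.le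
    have h2 : n.toNat ≤ n.toNat * n.toNat := Nat.le_mul_of_pos_left _ (by omega)
    push_cast [h2]
    rw [h1]; ring
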